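/- Let s ∈ {1,…,m} and let λ, μ ∈ ℤ^m be such that λ_k = μ_k for all k > s. If some element of W_p maps λ to μ, then some element of W_p(C_s) maps λ to μ. Consequently, the same holds for the dot action: if λ and μ are W_p-conjugate under the dot action and agree at all positions > s, then they are W_p(C_s)-conjugate under the dot action. -/

import Mathlib

/-- ρ = (m, m-1, …, 1); with 0-indexed coordinates, ρ k = m - k. -/
def rho {m : ℕ} : Fin m → ℤ := fun k => (m : ℤ) - (k : ℕ)

/-- A partition with at most m parts: weakly decreasing and nonnegative entries. -/
def IsPartitionVec {m : ℕ} (lam : Fin m → ℤ) : Prop :=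
  (∀ i j : Fin m, i ≤ j → lam j ≤ lam i) ∧ ∀ i, 0 ≤ lam i

/-- The length of a partition: the number of nonzero entries. -/
def plen {m : ℕ} (lam : Fin m → ℤ) : ℕ :=
  (Finset.univ.filter fun i => lam i ≠ 0).card

/-- A vector is regular if all entries are nonzero and no two entries have
the same absolute value. -/
def Regular {m : ℕ} (v : Fin m → ℤ) : Prop :=
  (∀ k, v k ≠ 0) ∧ ∀ k k', k ≠ k' → |v k| ≠ |v k'|

/-- Affine reflection s_{ε_i−ε_j,l}: x ↦ x − a(e_i − e_j), a = x_i − x_j − lp. -/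
def sMinus {m : ℕ} (p : ℤ) (i j : Fin m) (l : ℤ) (x : Fin m → ℤ) : Fin m → ℤ :=
  fun k => x k - (x i - x j - l * p) * ((if k = i then 1 else 0) - (if k = j then 1 else 0))

/-- Affine reflection s_{ε_i+ε_j,l}: x ↦ x − a(e_i + e_j), a = x_i + x_j − lp. -/
def sPlus {m : ℕ} (p : ℤ) (i j : Fin m) (l : ℤ) (x : Fin m → ℤ) : Fin m → ℤ :=
  fun k => x k - (x i + x j - l * p) * ((if k = i then 1 else 0) + (if k = j then 1 else 0))

/-- Affine reflection s_{2ε_i,l}: x ↦ x − 2a·e_i, a = x_i − lp. -/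
def sDouble {m : ℕ} (p : ℤ) (i : Fin m) (l : ℤ) (x : Fin m → ℤ) : Fin m → ℤ :=
  fun k => x k - 2 * (x i - l * p) * (if k = i then 1 else 0)

/-- λ is a p-core: for every i and every l ≥ 1 with (λ+ρ)_i − lp > 0, the number
(λ+ρ)_i − lp occurs as an entry of λ+ρ. -/
def IsPCore {m : ℕ} (p : ℕ) (lam : Fin m → ℤ) : Prop :=
  ∀ (i : Fin m) (l : ℤ), 1 ≤ l → 0 < lam i + rho i - l * p →
    ∃ j : Fin m, lam j + rho j = lam i + rho i - l * p

/-- The affine reflection s_{ε_i−ε_j,l} as a bijection of ℤ^m. -/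
def sMinusPerm {m : ℕ} (p : ℤ) (i j : Fin m) (h : i ≠ j) (l : ℤ) :
    Equiv.Perm (Fin m → ℤ) :=
  Function.Involutive.toPerm (sMinus p i j l) (by
    intro x; funext k
    simp only [sMinus]
    by_cases hki : k = i <;> by_cases hkj : k = j <;>
      simp [hki, hkj, h, Ne.symm h] <;> ring)

/-- The affine reflection s_{ε_i+ε_j,l} as a bijection of ℤ^m. -/
def sPlusPerm {m : ℕ} (p : ℤ) (i j : Fin m) (h : i ≠ j) (l : ℤ) :
    Equiv.Perm (Fin m → ℤ) :=
  Function.Involutive.toPerm (sPlus p i j l) (by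
    intro x; funext k
    simp only [sPlus]
    by_cases hki : k = i <;> by_cases hkj : k = j <;>
      simp [hki, hkj, h, Ne.symm h] <;> ring)

/-- The affine reflection s_{2ε_i,l} as a bijection of ℤ^m. -/
def sDoublePerm {m : ℕ} (p : ℤ) (i : Fin m) (l : ℤ) :
    Equiv.Perm (Fin m → ℤ) :=
  Function.Involutive.toPerm (sDouble p i l) (by
    intro x; funext k
    simp only [sDouble]
    by_cases hki : k = i <;> simp [hki] <;> ring)

/-- Generators of W_p(D_s): the reflections s_{ε_i−ε_j,l} and s_{ε_i+ε_j,l}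
for 1 ≤ i < j ≤ s (0-indexed: i < j, (j:ℕ) < s) and l ∈ ℤ. -/
def DGenerators (m : ℕ) (p : ℤ) (s : ℕ) : Set (Equiv.Perm (Fin m → ℤ)) :=
  {σ | ∃ (i j : Fin m) (l : ℤ) (h : i < j), (j : ℕ) < s ∧
        (σ = sMinusPerm p i j h.ne l ∨ σ = sPlusPerm p i j h.ne l)}

/-- The affine Weyl group W_p(D_s). -/
def WpD (m : ℕ) (p : ℤ) (s : ℕ) : Subgroup (Equiv.Perm (Fin m → ℤ)) :=
  Subgroup.closure (DGenerators m p s)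

/-- Generators of W_p(C_s): those of W_p(D_s) together with the reflections
s_{2ε_i,l} for 1 ≤ i ≤ s (0-indexed: (i:ℕ) < s) and l ∈ ℤ. -/
def CGenerators (m : ℕ) (p : ℤ) (s : ℕ) : Set (Equiv.Perm (Fin m → ℤ)) :=
  DGenerators m p s ∪ {σ | ∃ (i : Fin m) (l : ℤ), (i : ℕ) < s ∧ σ = sDoublePerm p i l}

/-- The affine Weyl group W_p(C_s). -/
def WpC (m : ℕ) (p : ℤ) (s : ℕ) : Subgroup (Equiv.Perm (Fin m → ℤ)) :=
  Subgroup.closure (CGenerators m p s)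

/-- μ and ν are conjugate under the dot action of the group G:
some element of G maps μ+ρ to ν+ρ. -/
def DotConj {m : ℕ} (G : Subgroup (Equiv.Perm (Fin m → ℤ))) (mu nu : Fin m → ℤ) : Prop :=
  ∃ g ∈ G, g (fun k => mu k + rho k) = fun k => nu k + rho k
open Finset in
/-- The relation: y is obtained from x by a signed permutation supported on the
first s coordinates together with a translation by p·c with even coordinate sum. -/
def SRel (p : ℤ) {m : ℕ} (s : ℕ) (x y : Fin m → ℤ) : Prop :=
  ∃ (σ : Equiv.Perm (Fin m)) (ε c : Fin m → ℤ),
    (∀ i, ε i = 1 ∨ ε i = -1) ∧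
    (∀ i : Fin m, s ≤ (i : ℕ) → σ i = i ∧ ε i = 1 ∧ c i = 0) ∧
    (∀ i, y i = ε i * x (σ i) + p * c i) ∧
    Even (∑ i, c i)

lemma even_shift {n : ℕ} (c d : Fin n → ℤ) (h : ∀ i, Even (d i - c i))
    (hc : Even (∑ i, c i)) : Even (∑ i, d i) := by
  have h1 : Even (∑ i, (d i - c i)) := Finset.even_sum _ (fun i _ => h i)
  have h2 := h1.add hc
  have h3 : (∑ i, (d i - c i)) + ∑ i, c i = ∑ i, d i := by
    rw [Finset.sum_sub_distrib]; ring
  rwa [h3] at h2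

lemma rel_refl (p : ℤ) {m : ℕ} (s : ℕ) (x : Fin m → ℤ) : SRel p s x x :=
  ⟨1, fun _ => 1, fun _ => 0, fun _ => Or.inl rfl, fun _ _ => ⟨rfl, rfl, rfl⟩,
   fun i => by simp, by simp⟩

lemma rel_symm {p : ℤ} {m s : ℕ} {x y : Fin m → ℤ} (h : SRel p s x y) : SRel p s y x := by
  obtain ⟨σ, ε, c, hε, htail, heq, hev⟩ := h
  refine ⟨σ⁻¹, fun j => ε (σ⁻¹ j), fun j => -(ε (σ⁻¹ j) * c (σ⁻¹ j)),
    fun j => hε _, ?_, ?_, ?_⟩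
  · intro i hi
    obtain ⟨h1, h2, h3⟩ := htail i hi
    have hinv : σ⁻¹ i = i := by
      conv_lhs => rw [← h1]
      exact σ.symm_apply_apply i
    refine ⟨hinv, ?_, ?_⟩
    · dsimp only; rw [hinv, h2]
    · dsimp only; rw [hinv, h2, h3]; ring
  · intro j
    dsimp only
    have := heq (σ⁻¹ j)
    rw [show σ (σ⁻¹ j) = j from σ.apply_symm_apply j] at this
    rcases hε (σ⁻¹ j) with h1 | h1 <;> rw [h1] at this ⊢ <;> linarith
  · have hc : (∑ j, -(ε (σ⁻¹ j) * c (σ⁻¹ j))) = ∑ i, -(ε i * c i) :=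
      Equiv.sum_comp σ⁻¹ (fun i => -(ε i * c i))
    rw [hc]
    refine even_shift c _ (fun i => ?_) hev
    rcases hε i with h1 | h1 <;> rw [h1]
    · exact ⟨-(c i), by ring⟩
    · exact ⟨0, by ring⟩

lemma rel_trans {p : ℤ} {m s : ℕ} {x y z : Fin m → ℤ}
    (h1 : SRel p s x y) (h2 : SRel p s y z) : SRel p s x z := by
  obtain ⟨σ, ε, c, hε, ht, heq, hev⟩ := h1
  obtain ⟨τ, ε', c', hε', ht', heq', hev'⟩ := h2
  refine ⟨σ * τ, fun i => ε' i * ε (τ i), fun i => ε' i * c (τ i) + c' i, ?_, ?_, ?_, ?_⟩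
  · intro i
    dsimp only
    rcases hε' i with h | h <;> rcases hε (τ i) with h' | h' <;> rw [h, h'] <;> norm_num
  · intro i hi
    obtain ⟨a1, a2, a3⟩ := ht i hi
    obtain ⟨b1, b2, b3⟩ := ht' i hi
    refine ⟨by rw [Equiv.Perm.mul_apply, b1, a1], ?_, ?_⟩
    · dsimp only; rw [b2, b1, a2]; ring
    · dsimp only; rw [b3, b1, a3]; ring
  · intro i
    dsimp only
    have e1 := heq' i
    have e2 := heq (τ i)
    rw [Equiv.Perm.mul_apply]
    rw [e2] at e1
    rw [e1]; ring
  · refine even_shift (fun i => c (τ i) + c' i) _ (fun i => ?_) ?_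
    · rcases hε' i with h | h <;> rw [h]
      · exact ⟨0, by ring⟩
      · exact ⟨-(c (τ i)), by ring⟩
    · have : (∑ i, (c (τ i) + c' i)) = (∑ i, c (τ i)) + ∑ i, c' i :=
        Finset.sum_add_distrib
      rw [this, Equiv.sum_comp τ c]
      exact hev.add hev'

lemma srel_sMinus (p : ℤ) {m : ℕ} (i j : Fin m) (h : i ≠ j) (l : ℤ) (y : Fin m → ℤ) :
    SRel p m y (sMinus p i j l y) := by
  refine ⟨Equiv.swap i j, fun _ => 1,
    fun k => (if k = i then l else 0) + (if k = j then -l else 0), fun _ => Or.inl rfl,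
    fun i hi => absurd hi (Nat.not_le.mpr i.isLt), ?_, ?_⟩
  · intro k
    by_cases hki : k = i <;> by_cases hkj : k = j <;>
      simp [sMinus, hki, hkj, h, Ne.symm h, Equiv.swap_apply_def] <;> ring
  · rw [Finset.sum_add_distrib, Finset.sum_ite_eq' Finset.univ i (fun _ => l),
      Finset.sum_ite_eq' Finset.univ j (fun _ => -l)]
    simp

lemma srel_sPlus (p : ℤ) {m : ℕ} (i j : Fin m) (h : i ≠ j) (l : ℤ) (y : Fin m → ℤ) :
    SRel p m y (sPlus p i j l y) := by
  refine ⟨Equiv.swap i j, fun k => if k = i then -1 else if k = j then -1 else 1,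
    fun k => (if k = i then l else 0) + (if k = j then l else 0), ?_, 
    fun i hi => absurd hi (Nat.not_le.mpr i.isLt), ?_, ?_⟩
  · intro k
    by_cases hki : k = i <;> by_cases hkj : k = j <;> simp [hki, hkj]
  · intro k
    by_cases hki : k = i <;> by_cases hkj : k = j <;>
      simp [sPlus, hki, hkj, h, Ne.symm h, Equiv.swap_apply_def] <;> ring
  · rw [Finset.sum_add_distrib, Finset.sum_ite_eq' Finset.univ i (fun _ => l),
      Finset.sum_ite_eq' Finset.univ j (fun _ => l)]
    simp

lemma srel_sDouble (p : ℤ) {m : ℕ} (i : Fin m) (l : ℤ) (y : Fin m → ℤ) :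
    SRel p m y (sDouble p i l y) := by
  refine ⟨1, fun k => if k = i then -1 else 1, fun k => if k = i then 2 * l else 0, ?_,
    fun i hi => absurd hi (Nat.not_le.mpr i.isLt), ?_, ?_⟩
  · intro k; by_cases hki : k = i <;> simp [hki]
  · intro k
    by_cases hki : k = i <;> simp [sDouble, hki] <;> ring
  · rw [Finset.sum_ite_eq' Finset.univ i (fun _ => 2 * l)]
    simp

lemma srel_of_WpC {p : ℤ} {m : ℕ} {g : Equiv.Perm (Fin m → ℤ)} (hg : g ∈ WpC m p m) :
    ∀ y, SRel p m y (g y) := by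
  induction hg using Subgroup.closure_induction with
  | mem g hgen =>
    intro y
    rcases hgen with ⟨i, j, l, hij, _, (rfl | rfl)⟩ | ⟨i, l, _, rfl⟩
    · exact srel_sMinus p i j hij.ne l y
    · exact srel_sPlus p i j hij.ne l y
    · exact srel_sDouble p i l y
  | one => intro y; exact rel_refl p m y
  | mul g h hg hh ihg ihh =>
    intro y
    have := rel_trans (ihh y) (ihg (h y))
    simpa [Equiv.Perm.mul_apply] using this
  | inv g hg ih =>
    intro y
    have := ih (g⁻¹ y)
    rw [show g (g⁻¹ y) = y from g.apply_symm_apply y] at this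
    exact rel_symm this

lemma srel_straighten {p : ℤ} (hp2 : ¬ (2 : ℤ) ∣ p) (hp0 : p ≠ 0) {m s : ℕ}
    {x y : Fin m → ℤ} (hagree : ∀ k : Fin m, s ≤ (k : ℕ) → x k = y k) :
    ∀ (n : ℕ) (σ : Equiv.Perm (Fin m)) (ε c : Fin m → ℤ),
      (Finset.univ.filter fun i : Fin m =>
          s ≤ (i : ℕ) ∧ ¬(σ i = i ∧ ε i = 1 ∧ c i = 0)).card ≤ n →
      (∀ i, ε i = 1 ∨ ε i = -1) →
      (∀ i, y i = ε i * x (σ i) + p * c i) →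
      Even (∑ i, c i) →
      SRel p s x y := by
  intro n
  induction n with
  | zero =>
    intro σ ε c hcard hε heq hev
    refine ⟨σ, ε, c, hε, ?_, heq, hev⟩
    intro i hi
    by_contra hbad
    have hmem : i ∈ Finset.univ.filter
        (fun i : Fin m => s ≤ (i : ℕ) ∧ ¬(σ i = i ∧ ε i = 1 ∧ c i = 0)) :=
      Finset.mem_filter.mpr ⟨Finset.mem_univ i, hi, hbad⟩
    have := Finset.card_pos.mpr ⟨i, hmem⟩
    omega
  | succ n ih =>
    intro σ ε c hcard hε heq hev
    by_cases hBe : (Finset.univ.filter fun i : Fin m =>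
        s ≤ (i : ℕ) ∧ ¬(σ i = i ∧ ε i = 1 ∧ c i = 0)) = ∅
    · exact ih σ ε c (by rw [hBe]; simp) hε heq hev
    · obtain ⟨k, hk⟩ := Finset.nonempty_iff_ne_empty.mpr hBe
      obtain ⟨-, hks, hkbad⟩ := Finset.mem_filter.mp hk
      have hxy : x k = y k := hagree k hks
      by_cases hσk : σ k = k
      · -- diagonal case
        have heqk : y k = ε k * x k + p * c k := by
          have := heq k; rwa [hσk] at this
        have hck : Even (c k) := by
          rcases hε k with h1 | h1
          · have : p * c k = 0 := by rw [h1] at heqk; linarith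
            rcases mul_eq_zero.mp this with h | h
            · exact absurd h hp0
            · rw [h]; exact Even.zero
          · have h2 : 2 * x k = p * c k := by rw [h1] at heqk; linarith
            have : Even (p * c k) := ⟨x k, by linarith⟩
            rcases Int.even_mul.mp this with h | h
            · exact absurd h.two_dvd hp2
            · exact h
        refine ih σ (fun j => if j = k then 1 else ε j)
          (fun j => c j + (if j = k then -c k else 0)) ?_ ?_ ?_ ?_
        · -- card bound
          beta_reduce
          have hsub : (Finset.univ.filter fun j : Fin m =>
              s ≤ (j : ℕ) ∧ ¬(σ j = j ∧ (if j = k then 1 else ε j) = 1 ∧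
                (c j + (if j = k then -c k else 0)) = 0)) ⊆
              (Finset.univ.filter fun i : Fin m =>
                s ≤ (i : ℕ) ∧ ¬(σ i = i ∧ ε i = 1 ∧ c i = 0)).erase k := by
            intro j hj
            obtain ⟨-, hjs, hjbad⟩ := Finset.mem_filter.mp hj
            have hjk : j ≠ k := by
              intro h; subst h
              exact hjbad ⟨hσk, by simp, by simp⟩
            exact Finset.mem_erase.mpr ⟨hjk,
              Finset.mem_filter.mpr ⟨Finset.mem_univ j, hjs, by
                simpa [hjk] using hjbad⟩⟩
          have h1 := Finset.card_le_card hsub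
          rw [Finset.card_erase_of_mem hk] at h1
          have := Finset.card_pos.mpr ⟨k, hk⟩
          omega
        · intro j
          by_cases hj : j = k <;> simp [hj, hε j]
        · intro j
          by_cases hj : j = k
          · subst hj
            simp [hσk, ← hxy]
          · simpa [hj] using heq j
        · have hsum : (∑ j, (c j + (if j = k then -c k else 0)))
              = (∑ j, c j) + -c k := by
            rw [Finset.sum_add_distrib, Finset.sum_ite_eq' Finset.univ k (fun _ => -c k)]
            simp
          rw [hsum]
          exact hev.add (by simpa using hck.neg)
      · -- off-diagonal case
        set i := σ.symm k with hi
        have hσi : σ i = k := σ.apply_symm_apply k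
        have hik : i ≠ k := by
          intro h; rw [h] at hσi; exact hσk hσi
        refine ih (σ * Equiv.swap i k)
          (fun j => if j = i then ε i * ε k else if j = k then 1 else ε j)
          (fun j => c j + ((if j = i then ε i * c k else 0)
              + (if j = k then -c k else 0))) ?_ ?_ ?_ ?_
        · -- card bound
          beta_reduce
          have hσ'k : (σ * Equiv.swap i k) k = k := by
            rw [Equiv.Perm.mul_apply, Equiv.swap_apply_right, hσi]
          have hsub : (Finset.univ.filter fun j : Fin m =>
              s ≤ (j : ℕ) ∧ ¬((σ * Equiv.swap i k) j = j ∧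
                (if j = i then ε i * ε k else if j = k then 1 else ε j) = 1 ∧
                (c j + ((if j = i then ε i * c k else 0) + (if j = k then -c k else 0))) = 0)) ⊆
              (Finset.univ.filter fun i : Fin m =>
                s ≤ (i : ℕ) ∧ ¬(σ i = i ∧ ε i = 1 ∧ c i = 0)).erase k := by
            intro j hj
            obtain ⟨-, hjs, hjbad⟩ := Finset.mem_filter.mp hj
            have hjk : j ≠ k := by
              intro h; subst h
              exact hjbad ⟨hσ'k, by simp [hik, Ne.symm hik], by simp [hik, Ne.symm hik]⟩
            refine Finset.mem_erase.mpr ⟨hjk, Finset.mem_filter.mpr ⟨Finset.mem_univ j, hjs, ?_⟩⟩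
            by_cases hji : j = i
            · subst hji
              intro hgood
              rw [hgood.1] at hσi
              exact hik hσi
            · intro hgood
              refine hjbad ⟨?_, by simp [hji, hjk, hgood.2.1], by simp [hji, hjk, hgood.2.2]⟩
              rw [Equiv.Perm.mul_apply, Equiv.swap_apply_of_ne_of_ne hji hjk]
              exact hgood.1
          have h1 := Finset.card_le_card hsub
          rw [Finset.card_erase_of_mem hk] at h1
          have := Finset.card_pos.mpr ⟨k, hk⟩
          omega
        · -- signs
          intro j
          by_cases hji : j = i
          · rw [if_pos hji]
            rcases hε i with h1 | h1 <;> rcases hε k with h2 | h2 <;>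
              rw [h1, h2] <;> norm_num
          · rw [if_neg hji]
            by_cases hjk : j = k
            · rw [if_pos hjk]; exact Or.inl rfl
            · rw [if_neg hjk]; exact hε j
        · -- equations
          intro j
          by_cases hji : j = i
          · subst hji
            have e1 := heq i
            rw [hσi] at e1
            have e2 := heq k
            simp only [Equiv.Perm.mul_apply, Equiv.swap_apply_left, if_neg hik,
              ite_true, eq_self_iff_true, if_true, if_pos rfl]
            linear_combination e1 + ε i * e2 + ε i * hxy
          · by_cases hjk : j = k
            · simp only [if_neg hji, if_pos hjk, Equiv.Perm.mul_apply]
              have hsw : Equiv.swap i k j = i := by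
                rw [hjk]; exact Equiv.swap_apply_right i k
              rw [hsw, hσi, hjk, ← hxy]
              ring
            · simp only [if_neg hji, if_neg hjk, Equiv.Perm.mul_apply,
                Equiv.swap_apply_of_ne_of_ne hji hjk]
              rw [heq j]; ring
        · -- parity
          have hsum : (∑ j, (c j + ((if j = i then ε i * c k else 0)
                + (if j = k then -c k else 0))))
              = (∑ j, c j) + (ε i * c k + -c k) := by
            rw [Finset.sum_add_distrib, Finset.sum_add_distrib,
              Finset.sum_ite_eq' Finset.univ i (fun _ => ε i * c k),
              Finset.sum_ite_eq' Finset.univ k (fun _ => -c k)]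
            simp
          rw [hsum]
          rcases hε i with h | h <;> rw [h]
          · simpa using hev
          · have he2 : Even (-(2 * c k)) := ⟨-c k, by ring⟩
            have h2 := hev.add he2
            convert h2 using 1; rfl; ring

def transPerm {m : ℕ} (v : Fin m → ℤ) : Equiv.Perm (Fin m → ℤ) where
  toFun x := fun k => x k + v k
  invFun x := fun k => x k - v k
  left_inv x := by funext k; dsimp; ring
  right_inv x := by funext k; dsimp; ring

@[simp] lemma transPerm_apply {m : ℕ} (v : Fin m → ℤ) (x : Fin m → ℤ) (k : Fin m) :
    transPerm v x k = x k + v k := rfl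

lemma transPerm_zero {m : ℕ} : transPerm (fun _ : Fin m => (0 : ℤ)) = 1 := by
  apply Equiv.ext; intro x; funext k; simp

lemma transPerm_add {m : ℕ} (v w : Fin m → ℤ) :
    transPerm (fun k => v k + w k) = transPerm v * transPerm w := by
  apply Equiv.ext; intro x; funext k
  simp [Equiv.Perm.mul_apply]; ring

lemma transPerm_neg {m : ℕ} (v : Fin m → ℤ) :
    transPerm (fun k => -v k) = (transPerm v)⁻¹ := by
  rw [eq_inv_iff_mul_eq_one, ← transPerm_add]
  simpa using transPerm_zero

lemma transPerm_nsmul {m : ℕ} (v : Fin m → ℤ) (n : ℕ) :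
    transPerm (fun k => (n : ℤ) * v k) = (transPerm v) ^ n := by
  induction n with
  | zero => simpa using transPerm_zero
  | succ n ihn =>
    have : (fun k => ((n : ℤ) + 1) * v k) = fun k => ((n : ℤ) * v k) + v k := by
      funext k; ring
    rw [pow_succ, ← ihn, ← transPerm_add]
    push_cast
    rw [this]

lemma transPerm_zsmul {m : ℕ} (v : Fin m → ℤ) (n : ℤ) :
    transPerm (fun k => n * v k) = (transPerm v) ^ n := by
  rcases le_or_gt 0 n with h | h
  · obtain ⟨a, rfl⟩ := Int.eq_ofNat_of_zero_le h
    rw [zpow_natCast, transPerm_nsmul]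
  · obtain ⟨a, rfl⟩ : ∃ a : ℕ, n = -(a : ℤ) := ⟨n.natAbs, by omega⟩
    have : (fun k => -(a : ℤ) * v k) = fun k => -((a : ℤ) * v k) := by funext k; ring
    rw [this, transPerm_neg ((a:ℤ) * v ·), transPerm_nsmul, zpow_neg, zpow_natCast]

lemma transPerm_sum_mem {m : ℕ} {α : Type*} {G : Subgroup (Equiv.Perm (Fin m → ℤ))}
    (F : Finset α) (v : α → Fin m → ℤ) (h : ∀ i ∈ F, transPerm (v i) ∈ G) :
    transPerm (fun k => ∑ i ∈ F, v i k) ∈ G := by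
  induction F using Finset.cons_induction with
  | empty => simpa [transPerm_zero] using one_mem G
  | cons a F ha ih =>
    have : (fun k => ∑ i ∈ Finset.cons a F ha, v i k)
        = fun k => v a k + ∑ i ∈ F, v i k := by
      funext k; rw [Finset.sum_cons]
    rw [this, transPerm_add]
    exact mul_mem (h a (Finset.mem_cons_self a F)) (ih fun i hi => h i (Finset.mem_cons.mpr (Or.inr hi)))

lemma sMinusPerm_mem {m : ℕ} (p : ℤ) {s : ℕ} {i j : Fin m} (hij : i < j)
    (hj : (j : ℕ) < s) (l : ℤ) : sMinusPerm p i j hij.ne l ∈ WpC m p s :=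
  Subgroup.subset_closure (Or.inl ⟨i, j, l, hij, hj, Or.inl rfl⟩)

lemma sDoublePerm_mem {m : ℕ} (p : ℤ) {s : ℕ} {i : Fin m} (hi : (i : ℕ) < s)
    (l : ℤ) : sDoublePerm p i l ∈ WpC m p s :=
  Subgroup.subset_closure (Or.inr ⟨i, l, hi, rfl⟩)

lemma transPerm_minus_mem {m : ℕ} (p : ℤ) {s : ℕ} {i j : Fin m} (hij : i < j)
    (hj : (j : ℕ) < s) :
    transPerm (fun k => p * ((if k = i then 1 else 0) - (if k = j then 1 else 0)))
      ∈ WpC m p s := by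
  have key : transPerm (fun k => p * ((if k = i then 1 else 0) - (if k = j then 1 else 0)))
      = sMinusPerm p i j hij.ne 1 * sMinusPerm p i j hij.ne 0 := by
    apply Equiv.ext; intro x; funext k
    have h := hij.ne
    simp only [Equiv.Perm.mul_apply, sMinusPerm, Function.Involutive.toPerm, Equiv.coe_fn_mk,
      sMinus, transPerm_apply]
    by_cases hki : k = i <;> by_cases hkj : k = j <;>
      simp [hki, hkj, h, Ne.symm h] <;> ring
  rw [key]
  exact mul_mem (sMinusPerm_mem p hij hj 1) (sMinusPerm_mem p hij hj 0)

lemma transPerm_double_mem {m : ℕ} (p : ℤ) {s : ℕ} {i : Fin m} (hi : (i : ℕ) < s) :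
    transPerm (fun k => 2 * p * (if k = i then 1 else 0)) ∈ WpC m p s := by
  have key : transPerm (fun k => 2 * p * (if k = i then 1 else 0))
      = sDoublePerm p i 1 * sDoublePerm p i 0 := by
    apply Equiv.ext; intro x; funext k
    simp only [Equiv.Perm.mul_apply, sDoublePerm, Function.Involutive.toPerm, Equiv.coe_fn_mk,
      sDouble, transPerm_apply]
    by_cases hki : k = i <;> simp [hki] <;> ring
  rw [key]
  exact mul_mem (sDoublePerm_mem p hi 1) (sDoublePerm_mem p hi 0)

lemma transPerm_mem {m : ℕ} (p : ℤ) {s : ℕ} (hs1 : 1 ≤ s) (hsm : s ≤ m)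
    (c : Fin m → ℤ) (hsupp : ∀ i : Fin m, s ≤ (i : ℕ) → c i = 0)
    (hev : Even (∑ i, c i)) : transPerm (fun k => p * c k) ∈ WpC m p s := by
  have hm : 0 < m := lt_of_lt_of_le hs1 hsm
  set i0 : Fin m := ⟨0, hm⟩ with hi0
  obtain ⟨t, ht⟩ := hev
  set w : Fin m → Fin m → ℤ := fun i k =>
    c i * (p * ((if k = i then 1 else 0) - (if k = i0 then 1 else 0))) with hw
  set u : Fin m → ℤ := fun k => t * (2 * p * (if k = i0 then 1 else 0)) with hu
  have key : (fun k => p * c k) = fun k => (∑ i, w i k) + u k := by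
    funext k
    have hterm : ∀ i : Fin m, w i k
        = (if k = i then p * c i else 0) - (if k = i0 then p * c i else 0) := by
      intro i
      rw [hw]
      by_cases h1 : k = i <;> by_cases h2 : k = i0 <;>
        simp [h1, h2] <;> split_ifs <;> ring
    have hsum : (∑ i, w i k) = p * c k - (if k = i0 then p * (∑ i, c i) else 0) := by
      rw [Finset.sum_congr rfl (fun i _ => hterm i), Finset.sum_sub_distrib,
        Finset.sum_ite_eq Finset.univ k (fun i => p * c i)]
      by_cases h2 : k = i0 <;> simp [h2, Finset.mul_sum]
    rw [hsum, hu]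
    by_cases h2 : k = i0 <;> simp [h2] <;> rw [ht] <;> ring
  rw [key, transPerm_add]
  refine mul_mem (transPerm_sum_mem Finset.univ w (fun i _ => ?_)) ?_
  · -- each w i
    by_cases hc0 : c i = 0
    · have : w i = fun _ => (0 : ℤ) := by funext k; rw [hw]; dsimp only; rw [hc0]; ring
      rw [this, transPerm_zero]; exact one_mem _
    · have his : (i : ℕ) < s := by
        by_contra h
        exact hc0 (hsupp i (Nat.le_of_not_lt h))
      by_cases hii0 : i = i0
      · have : w i = fun _ => (0 : ℤ) := by
          funext k; rw [hw]; dsimp only; rw [hii0]; ring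
        rw [this, transPerm_zero]; exact one_mem _
      · have hlt : i0 < i := by
          refine lt_of_le_of_ne ?_ (Ne.symm hii0)
          have : (i0 : ℕ) = 0 := rfl
          exact Fin.le_def.mpr (by omega)
        have hbase : transPerm (fun k =>
            p * ((if k = i then 1 else 0) - (if k = i0 then 1 else 0))) ∈ WpC m p s := by
          have hmem := transPerm_minus_mem p hlt his
          have : (fun k : Fin m => p * ((if k = i then 1 else 0) - (if k = i0 then 1 else 0)))
              = fun k => -(p * ((if k = i0 then 1 else 0) - (if k = i then 1 else 0))) := by
            funext k; ring
          rw [this, transPerm_neg]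
          exact inv_mem hmem
        have : transPerm (w i) = (transPerm (fun k =>
            p * ((if k = i then 1 else 0) - (if k = i0 then 1 else 0)))) ^ (c i) := by
          rw [hw, ← transPerm_zsmul]
        rw [this]
        exact zpow_mem hbase (c i)
  · -- u
    have : transPerm u = (transPerm (fun k =>
        2 * p * (if k = i0 then 1 else 0))) ^ t := by
      rw [hu, ← transPerm_zsmul]
    rw [this]
    exact zpow_mem (transPerm_double_mem p (by simp [hi0]; omega)) t

def permAct {m : ℕ} (σ : Equiv.Perm (Fin m)) : Equiv.Perm (Fin m → ℤ) where
  toFun x := x ∘ σ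
  invFun x := x ∘ σ.symm
  left_inv x := by funext k; simp
  right_inv x := by funext k; simp

@[simp] lemma permAct_apply {m : ℕ} (σ : Equiv.Perm (Fin m)) (x : Fin m → ℤ) (k : Fin m) :
    permAct σ x k = x (σ k) := rfl

lemma permAct_one {m : ℕ} : permAct (1 : Equiv.Perm (Fin m)) = 1 := by
  apply Equiv.ext; intro x; funext k; rfl

lemma permAct_mul {m : ℕ} (σ τ : Equiv.Perm (Fin m)) :
    permAct (σ * τ) = permAct τ * permAct σ := by
  apply Equiv.ext; intro x; funext k
  simp [Equiv.Perm.mul_apply]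

lemma permAct_swap_mem {m : ℕ} (p : ℤ) {s : ℕ} {a b : Fin m} (hab : a < b)
    (hb : (b : ℕ) < s) : permAct (Equiv.swap a b) ∈ WpC m p s := by
  have h := hab.ne
  have key : permAct (Equiv.swap a b) = sMinusPerm p a b h 0 := by
    apply Equiv.ext; intro x; funext k
    simp only [permAct_apply, sMinusPerm, Function.Involutive.toPerm, Equiv.coe_fn_mk, sMinus]
    by_cases hka : k = a <;> by_cases hkb : k = b <;>
      simp [hka, hkb, h, Ne.symm h, Equiv.swap_apply_def] <;> ring
  rw [key]
  exact sMinusPerm_mem p hab hb 0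

lemma permAct_mem {m : ℕ} (p : ℤ) {s : ℕ} :
    ∀ (n : ℕ) (σ : Equiv.Perm (Fin m)),
      (Finset.univ.filter fun j : Fin m => σ j ≠ j).card ≤ n →
      (∀ j : Fin m, s ≤ (j : ℕ) → σ j = j) →
      permAct σ ∈ WpC m p s := by
  intro n
  induction n with
  | zero =>
    intro σ hcard _
    have hσ : σ = 1 := by
      apply Equiv.ext; intro j
      by_contra hj
      have : j ∈ Finset.univ.filter fun j : Fin m => σ j ≠ j :=
        Finset.mem_filter.mpr ⟨Finset.mem_univ j, hj⟩
      have := Finset.card_pos.mpr ⟨j, this⟩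
      omega
    rw [hσ, permAct_one]
    exact one_mem _
  | succ n ih =>
    intro σ hcard htail
    by_cases hBe : (Finset.univ.filter fun j : Fin m => σ j ≠ j) = ∅
    · exact ih σ (by rw [hBe]; simp) htail
    · obtain ⟨i, hi⟩ := Finset.nonempty_iff_ne_empty.mpr hBe
      have hii : σ i ≠ i := (Finset.mem_filter.mp hi).2
      have his : (i : ℕ) < s := by
        by_contra hle
        exact hii (htail i (Nat.le_of_not_lt hle))
      have hsis : ((σ i : Fin m) : ℕ) < s := by
        by_contra hle
        exact hii (σ.injective (htail (σ i) (Nat.le_of_not_lt hle)))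
      have hij : i ≠ σ i := fun h => hii h.symm
      set σ' := Equiv.swap i (σ i) * σ with hσ'
      have hdecomp : σ = Equiv.swap i (σ i) * σ' := by
        rw [hσ', ← mul_assoc, Equiv.swap_mul_self, one_mul]
      have hσ'i : σ' i = i := by
        rw [hσ', Equiv.Perm.mul_apply, Equiv.swap_apply_right]
      have hfix : ∀ t : Fin m, σ t = t → σ' t = t := by
        intro t ht
        have hti : t ≠ i := fun h => hii (h ▸ ht)
        have htj : t ≠ σ i := by
          intro h
          exact hti (σ.injective (ht.trans h) ▸ rfl)
        rw [hσ', Equiv.Perm.mul_apply, ht, Equiv.swap_apply_of_ne_of_ne hti htj]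
      have hsub : (Finset.univ.filter fun j : Fin m => σ' j ≠ j) ⊆
          (Finset.univ.filter fun j : Fin m => σ j ≠ j).erase i := by
        intro t ht
        have ht' : σ' t ≠ t := (Finset.mem_filter.mp ht).2
        refine Finset.mem_erase.mpr ⟨fun h => ht' (h ▸ hσ'i), Finset.mem_filter.mpr
          ⟨Finset.mem_univ t, fun h => ht' (hfix t h)⟩⟩
      have hcard' : (Finset.univ.filter fun j : Fin m => σ' j ≠ j).card ≤ n := by
        have h1 := Finset.card_le_card hsub
        rw [Finset.card_erase_of_mem hi] at h1
        have := Finset.card_pos.mpr ⟨i, hi⟩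
        omega
      have htail' : ∀ j : Fin m, s ≤ (j : ℕ) → σ' j = j := by
        intro j hj
        exact hfix j (htail j hj)
      have hmem' := ih σ' hcard' htail'
      have hswap : permAct (Equiv.swap i (σ i)) ∈ WpC m p s := by
        rcases lt_or_gt_of_ne hij with h | h
        · exact permAct_swap_mem p h hsis
        · rw [Equiv.swap_comm]
          exact permAct_swap_mem p h his
      rw [hdecomp, permAct_mul]
      exact mul_mem hmem' hswap

lemma sign_mem {m : ℕ} (p : ℤ) {s : ℕ} (F : Finset (Fin m))
    (hF : ∀ i ∈ F, (i : ℕ) < s) :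
    ∃ g ∈ WpC m p s, ∀ (x : Fin m → ℤ) (k : Fin m),
      g x k = if k ∈ F then -x k else x k := by
  induction F using Finset.cons_induction with
  | empty => exact ⟨1, one_mem _, by simp⟩
  | cons a F ha ih =>
    obtain ⟨g, hg, hgact⟩ := ih (fun i hi => hF i (Finset.mem_cons.mpr (Or.inr hi)))
    refine ⟨sDoublePerm p a 0 * g,
      mul_mem (sDoublePerm_mem p (hF a (Finset.mem_cons_self a F)) 0) hg, ?_⟩
    intro x k
    rw [Equiv.Perm.mul_apply]
    show sDouble p a 0 (g x) k = _
    simp only [sDouble, hgact]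
    by_cases hka : k = a
    · subst hka
      simp [ha, Finset.mem_cons]
      ring
    · by_cases hkF : k ∈ F <;>
        simp [hka, hkF, Finset.mem_cons] <;> ring

lemma srel_realize {p : ℤ} {m s : ℕ} (hs1 : 1 ≤ s) (hsm : s ≤ m)
    {x y : Fin m → ℤ} (h : SRel p s x y) : ∃ g ∈ WpC m p s, g x = y := by
  obtain ⟨σ, ε, c, hε, htail, heq, hev⟩ := h
  obtain ⟨gs, hgs, hgsact⟩ := sign_mem p (Finset.univ.filter fun i => ε i = -1)
    (by
      intro i hi
      have hi' : ε i = -1 := (Finset.mem_filter.mp hi).2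
      by_contra hle
      have := (htail i (Nat.le_of_not_lt hle)).2.1
      rw [this] at hi'
      norm_num at hi')
  have hperm : permAct σ ∈ WpC m p s :=
    permAct_mem p _ σ le_rfl (fun j hj => (htail j hj).1)
  have htrans : transPerm (fun k => p * c k) ∈ WpC m p s :=
    transPerm_mem p hs1 hsm c (fun i hi => (htail i hi).2.2) hev
  refine ⟨transPerm (fun k => p * c k) * (gs * permAct σ),
    mul_mem htrans (mul_mem hgs hperm), ?_⟩
  funext k
  rw [Equiv.Perm.mul_apply, Equiv.Perm.mul_apply, transPerm_apply, hgsact]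
  simp only [permAct_apply, Finset.mem_filter, Finset.mem_univ, true_and]
  rw [heq k]
  rcases hε k with h1 | h1 <;> rw [h1] <;> norm_num

theorem statement13 (m p : ℕ) (hp : p.Prime) (hodd : Odd p)
    (s : ℕ) (hs1 : 1 ≤ s) (hsm : s ≤ m)
    (lam mu : Fin m → ℤ) (hagree : ∀ k : Fin m, s ≤ (k : ℕ) → lam k = mu k) :
    ((∃ g ∈ WpC m (p : ℤ) m, g lam = mu) → ∃ g ∈ WpC m (p : ℤ) s, g lam = mu) ∧
    ((∃ g ∈ WpC m (p : ℤ) m, g (fun k => lam k + rho k) = fun k => mu k + rho k) →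
      ∃ g ∈ WpC m (p : ℤ) s, g (fun k => lam k + rho k) = fun k => mu k + rho k) := by
  have hp0 : (p : ℤ) ≠ 0 := Int.natCast_ne_zero.mpr hp.ne_zero
  have hp2 : ¬ (2 : ℤ) ∣ (p : ℤ) := by
    intro hdvd
    have h2 : (2 : ℕ) ∣ p := by exact_mod_cast hdvd
    exact (Nat.not_even_iff_odd.mpr hodd) (even_iff_two_dvd.mpr h2)
  have main : ∀ x y : Fin m → ℤ, (∀ k : Fin m, s ≤ (k : ℕ) → x k = y k) →
      (∃ g ∈ WpC m (p : ℤ) m, g x = y) → ∃ g ∈ WpC m (p : ℤ) s, g x = y := by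
    rintro x y hxy ⟨g, hg, rfl⟩
    obtain ⟨σ, ε, c, hε, -, heq, hev⟩ := srel_of_WpC hg x
    exact srel_realize hs1 hsm (srel_straighten hp2 hp0 hxy _ σ ε c le_rfl hε heq hev)
  exact ⟨main lam mu hagree, main _ _ (fun k hk => by rw [hagree k hk])⟩
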